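/- If the synthetic covariates satisfy norm-recoverability and tau > 0, the catalytic-regularized objective F(beta) = -log PL(beta) + (tau/M) sum_{i=1}^M [exp(<X_i*,beta>) Y_i* h_0^+ - <X_i*,beta>] is coercive (F(beta) -> infinity as ||beta||_2 -> infinity), and therefore the catalytic-regularized estimator, the minimizer of F, exists. -/

import Mathlib

open Real Filter
open scoped RealInnerProductSpace BigOperators

/-- The objective function of the catalytic-regularized estimator. -/
noncomputable def creObjective (p n M : ℕ)
    (X : Fin n → EuclideanSpace ℝ (Fin p)) (δ : Fin n → ℝ)
    (R : Fin n → Finset (Fin n))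
    (Xs : Fin M → EuclideanSpace ℝ (Fin p)) (Ys : Fin M → ℝ)
    (h0 τ : ℝ) (β : EuclideanSpace ℝ (Fin p)) : ℝ :=
  (-∑ i, δ i * (⟪X i, β⟫ - Real.log (∑ j ∈ R i, Real.exp ⟪X j, β⟫)))
    + (τ / (M : ℝ)) * ∑ i, (Real.exp ⟪Xs i, β⟫ * Ys i * h0 - ⟪Xs i, β⟫)

/-- Key pointwise bound: for `a > 0`, `|t| ≤ a * exp t - t + 4 / a`. -/
lemma cre_abs_le_exp (a t : ℝ) (ha : 0 < a) : |t| ≤ a * Real.exp t - t + 4 / a := by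
  rcases le_or_gt t 0 with h | h
  · rw [abs_of_nonpos h]
    have h1 := Real.exp_pos t
    have h2 : 0 < 4 / a := by positivity
    nlinarith
  · rw [abs_of_pos h]
    have hq : t * t / 4 ≤ Real.exp t := by
      have h1 : Real.exp t = Real.exp (t / 2) * Real.exp (t / 2) := by
        rw [← Real.exp_add]; ring_nf
      have h2 : t / 2 + 1 ≤ Real.exp (t / 2) := Real.add_one_le_exp (t / 2)
      nlinarith
    have hsq : 0 ≤ (a / 4) * (t - 4 / a) ^ 2 := by positivity
    have : (a / 4) * (t - 4 / a) ^ 2 = a * (t * t / 4) - 2 * t + 4 / a := by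
      field_simp; ring
    nlinarith

/-- Under norm-recoverability of the synthetic covariates and `τ > 0`, the
catalytic-regularized objective is coercive, hence the catalytic-regularized
estimator (a minimizer) exists. -/
theorem creObjective_coercive_and_min_exists (p n M : ℕ) (hM : 0 < M)
    (X : Fin n → EuclideanSpace ℝ (Fin p)) (Y : Fin n → ℝ) (δ : Fin n → ℝ)
    (hδ : ∀ i, δ i = 0 ∨ δ i = 1)
    (R : Fin n → Finset (Fin n)) (hR : ∀ i j, j ∈ R i ↔ Y i ≤ Y j)
    (Xs : Fin M → EuclideanSpace ℝ (Fin p)) (Ys : Fin M → ℝ) (hYs : ∀ i, 0 < Ys i)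
    (h0 τ c1 : ℝ) (hh0 : 0 < h0) (hτ : 0 < τ) (hc1 : 0 < c1)
    (hnr : ∀ β : EuclideanSpace ℝ (Fin p),
      c1 * ‖β‖ ≤ (1 / (M : ℝ)) * ∑ i, |⟪Xs i, β⟫|) :
    Filter.Tendsto (creObjective p n M X δ R Xs Ys h0 τ)
      (Filter.comap (fun β : EuclideanSpace ℝ (Fin p) => ‖β‖) Filter.atTop) Filter.atTop ∧
    ∃ β₀ : EuclideanSpace ℝ (Fin p), ∀ β,
      creObjective p n M X δ R Xs Ys h0 τ β₀ ≤ creObjective p n M X δ R Xs Ys h0 τ β := by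
  have hMpos : (0 : ℝ) < (M : ℝ) := by exact_mod_cast hM
  set K : ℝ := ∑ i : Fin M, 4 / (Ys i * h0) with hK
  -- positivity of the sum inside logs
  have hsumpos : ∀ (i : Fin n) (β : EuclideanSpace ℝ (Fin p)),
      0 < ∑ j ∈ R i, Real.exp ⟪X j, β⟫ := by
    intro i β
    refine Finset.sum_pos (fun j _ => Real.exp_pos _) ⟨i, (hR i i).mpr le_rfl⟩
  -- the negative log partial likelihood is nonnegative
  have hPL : ∀ β, 0 ≤ -∑ i, δ i * (⟪X i, β⟫ - Real.log (∑ j ∈ R i, Real.exp ⟪X j, β⟫)) := by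
    intro β
    rw [neg_nonneg]
    refine Finset.sum_nonpos fun i _ => ?_
    have hle : Real.exp ⟪X i, β⟫ ≤ ∑ j ∈ R i, Real.exp ⟪X j, β⟫ :=
      Finset.single_le_sum (f := fun j => Real.exp ⟪X j, β⟫)
        (fun j _ => (Real.exp_pos _).le) ((hR i i).mpr le_rfl)
    have hlog : ⟪X i, β⟫ ≤ Real.log (∑ j ∈ R i, Real.exp ⟪X j, β⟫) := by
      calc ⟪X i, β⟫ = Real.log (Real.exp ⟪X i, β⟫) := (Real.log_exp _).symm
        _ ≤ _ := Real.log_le_log (Real.exp_pos _) hle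
    rcases hδ i with h | h
    · simp [h]
    · rw [h, one_mul]; linarith
  -- coercive lower bound
  have hlb : ∀ β, τ * c1 * ‖β‖ - τ / M * K ≤ creObjective p n M X δ R Xs Ys h0 τ β := by
    intro β
    have hpen : ∀ i : Fin M, |⟪Xs i, β⟫| - 4 / (Ys i * h0)
        ≤ Real.exp ⟪Xs i, β⟫ * Ys i * h0 - ⟪Xs i, β⟫ := by
      intro i
      have := cre_abs_le_exp (Ys i * h0) ⟪Xs i, β⟫ (mul_pos (hYs i) hh0)
      nlinarith [this]
    have hsum : (∑ i : Fin M, |⟪Xs i, β⟫|) - K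
        ≤ ∑ i, (Real.exp ⟪Xs i, β⟫ * Ys i * h0 - ⟪Xs i, β⟫) := by
      rw [hK, ← Finset.sum_sub_distrib]
      exact Finset.sum_le_sum fun i _ => hpen i
    have h1 : τ * c1 * ‖β‖ ≤ τ / M * ∑ i : Fin M, |⟪Xs i, β⟫| := by
      have := mul_le_mul_of_nonneg_left (hnr β) hτ.le
      calc τ * c1 * ‖β‖ = τ * (c1 * ‖β‖) := by ring
        _ ≤ τ * ((1 / (M : ℝ)) * ∑ i, |⟪Xs i, β⟫|) := this
        _ = τ / M * ∑ i : Fin M, |⟪Xs i, β⟫| := by ring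
    have h2 : τ / M * ((∑ i : Fin M, |⟪Xs i, β⟫|) - K)
        ≤ τ / M * ∑ i, (Real.exp ⟪Xs i, β⟫ * Ys i * h0 - ⟪Xs i, β⟫) :=
      mul_le_mul_of_nonneg_left hsum (by positivity)
    have h3 := hPL β
    unfold creObjective
    nlinarith [h2, h1, h3]
  -- coercivity
  have hcoer : Filter.Tendsto (creObjective p n M X δ R Xs Ys h0 τ)
      (Filter.comap (fun β : EuclideanSpace ℝ (Fin p) => ‖β‖) Filter.atTop) Filter.atTop := by
    refine tendsto_atTop_mono hlb ?_
    have hnorm : Tendsto (fun β : EuclideanSpace ℝ (Fin p) => ‖β‖)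
        (Filter.comap (fun β : EuclideanSpace ℝ (Fin p) => ‖β‖) Filter.atTop) atTop :=
      tendsto_comap
    have hmul : Tendsto (fun x : ℝ => τ * c1 * x - τ / M * K) atTop atTop := by
      apply tendsto_atTop_add_const_right
      exact Tendsto.const_mul_atTop (mul_pos hτ hc1) tendsto_id
    exact hmul.comp hnorm
  refine ⟨hcoer, ?_⟩
  -- continuity of the objective
  have hinner : ∀ v : EuclideanSpace ℝ (Fin p),
      Continuous fun β : EuclideanSpace ℝ (Fin p) => ⟪v, β⟫ :=
    fun v => continuous_const.inner continuous_id
  have hcont : Continuous (creObjective p n M X δ R Xs Ys h0 τ) := by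
    unfold creObjective
    apply Continuous.add
    · apply Continuous.neg
      apply continuous_finset_sum
      intro i _
      apply Continuous.mul continuous_const
      apply Continuous.sub (hinner (X i))
      apply Continuous.log
      · exact continuous_finset_sum _ fun j _ => (hinner (X j)).rexp
      · exact fun β => (hsumpos i β).ne'
    · apply Continuous.mul continuous_const
      apply continuous_finset_sum
      intro i _
      exact (((hinner (Xs i)).rexp.mul continuous_const).mul continuous_const).sub
        (hinner (Xs i))
  have hcocompact : Tendsto (creObjective p n M X δ R Xs Ys h0 τ)
      (cocompact (EuclideanSpace ℝ (Fin p))) atTop :=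
    hcoer.mono_left (tendsto_iff_comap.mp tendsto_norm_cocompact_atTop)
  exact hcont.exists_forall_le hcocompact
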